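/- For all positive integers k, t and n, one has mi_k(n) ≥ t^{⌊n/m(k,t)⌋}. -/

import Mathlib

open SimpleGraph

/-- `D` is a `k`-dominating independent set of `G`: `D` is independent and every vertex
outside `D` has at least `k` neighbours in `D`. -/
def IsKDIS {V : Type*} [Fintype V] (G : SimpleGraph V) (k : ℕ) (D : Finset V) : Prop :=
  (∀ x ∈ D, ∀ y ∈ D, ¬ G.Adj x y) ∧
  ∀ v : V, v ∉ D → k ≤ (G.neighborSet v ∩ (D : Set V)).ncard

/-- The number of `k`-dominating independent sets of `G`. -/
noncomputable def numKDIS {V : Type*} [Fintype V] (G : SimpleGraph V) (k : ℕ) : ℕ :=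
  Nat.card {D : Finset V // IsKDIS G k D}

/-- `mi k n`: the maximum number of `k`-dominating independent sets in a simple graph
on `n` vertices. -/
noncomputable def mi (k n : ℕ) : ℕ :=
  sSup {m : ℕ | ∃ G : SimpleGraph (Fin n), numKDIS G k = m}

/-- `mDIS k t`: the smallest `n` such that some simple graph on `n` vertices has at least
`t` `k`-dominating independent sets. -/
noncomputable def mDIS (k t : ℕ) : ℕ :=
  sInf {n : ℕ | ∃ G : SimpleGraph (Fin n), t ≤ numKDIS G k}

section Helpers
variable {V W : Type*} [Fintype V] [Fintype W]

lemma numKDIS_le (G : SimpleGraph V) (k : ℕ) : numKDIS G k ≤ 2 ^ Fintype.card V := by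
  classical
  have : numKDIS G k ≤ Nat.card (Finset V) :=
    Nat.card_le_card_of_injective Subtype.val Subtype.val_injective
  simpa [Nat.card_eq_fintype_card, Fintype.card_finset] using this

lemma le_mi {n : ℕ} (G : SimpleGraph (Fin n)) (k : ℕ) : numKDIS G k ≤ mi k n := by
  refine le_csSup ⟨2 ^ n, ?_⟩ ⟨G, rfl⟩
  rintro x ⟨G', rfl⟩
  simpa using numKDIS_le G' k

lemma IsKDIS.comap_equiv {G : SimpleGraph V} {k : ℕ} {D : Finset V} (h : IsKDIS G k D)
    (e : V ≃ W) : IsKDIS (G.comap ⇑e.symm) k (D.map e.toEmbedding) := by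
  classical
  constructor
  · intro x hx y hy hadj
    rw [Finset.mem_map_equiv] at hx hy
    exact h.1 _ hx _ hy hadj
  · intro v hv
    rw [Finset.mem_map_equiv] at hv
    have hset : ((G.comap ⇑e.symm).neighborSet v ∩ ((D.map e.toEmbedding : Finset W) : Set W))
        = ⇑e '' (G.neighborSet (e.symm v) ∩ (D : Set V)) := by
      rw [Equiv.image_eq_preimage_symm]
      ext w
      simp [SimpleGraph.neighborSet, Finset.mem_map_equiv, SimpleGraph.comap]
    rw [hset, Set.ncard_image_of_injective _ e.injective]
    exact h.2 _ hv

lemma numKDIS_comap (e : V ≃ W) (G : SimpleGraph V) (k : ℕ) :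
    numKDIS (G.comap ⇑e.symm) k = numKDIS G k := by
  classical
  apply Nat.card_congr
  refine (Equiv.subtypeEquiv e.finsetCongr fun D => ⟨fun h => ?_, fun h => ?_⟩).symm
  · exact h.comap_equiv e
  · have := h.comap_equiv e.symm
    have hG : (G.comap ⇑e.symm).comap ⇑e.symm.symm = G := by
      ext a b; simp
    have hD : (e.finsetCongr D).map e.symm.toEmbedding = D := by
      ext a; simp [Finset.mem_map_equiv]
    rwa [hG, hD] at this

def baseGraph (t k : ℕ) : SimpleGraph (Fin t × Fin k) where
  Adj a b := a.1 ≠ b.1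
  symm := ⟨fun a b h => h.symm⟩
  loopless := ⟨fun a h => h rfl⟩

lemma base_numKDIS (t k : ℕ) (hk : 1 ≤ k) : t ≤ numKDIS (baseGraph t k) k := by
  classical
  set D : Fin t → Finset (Fin t × Fin k) := fun a => ({a} : Finset (Fin t)) ×ˢ Finset.univ with hD
  have hmem : ∀ a p, p ∈ D a ↔ p.1 = a := by
    intro a p
    obtain ⟨p1, p2⟩ := p
    simp only [hD, Finset.mem_product, Finset.mem_singleton, Finset.mem_univ, and_true]
  have hDIS : ∀ a, IsKDIS (baseGraph t k) k (D a) := by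
    intro a
    constructor
    · intro x hx y hy hadj
      rw [hmem] at hx hy
      exact hadj (hx.trans hy.symm)
    · intro v hv
      rw [hmem] at hv
      have hset : ((baseGraph t k).neighborSet v ∩ (D a : Set _)) = (D a : Set _) := by
        ext p
        simp only [Set.mem_inter_iff, SimpleGraph.mem_neighborSet, Finset.mem_coe, hmem,
          and_iff_right_iff_imp]
        intro hp
        show v.1 ≠ p.1
        rw [hp]; exact hv
      rw [hset, Set.ncard_coe_finset]
      simp [hD]
  have hinj : Function.Injective (fun a => (⟨D a, hDIS a⟩ : {S // IsKDIS (baseGraph t k) k S})) := by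
    intro a b hab
    have hDab : D a = D b := congrArg Subtype.val hab
    have h1 : (a, (⟨0, Nat.lt_of_lt_of_le Nat.zero_lt_one hk⟩ : Fin k)) ∈ D a := (hmem a _).mpr rfl
    rw [hDab, hmem] at h1
    exact h1
  have := Nat.card_le_card_of_injective _ hinj
  simpa [numKDIS, Nat.card_eq_fintype_card] using this

end Helpers

section Main

def prodGraph {m : ℕ} (H : SimpleGraph (Fin m)) (q r : ℕ) :
    SimpleGraph ((Fin q × Fin m) ⊕ Fin r) where
  Adj v w := match v, w with
    | .inl p, .inl p' => p.1 = p'.1 ∧ H.Adj p.2 p'.2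
    | _, _ => False
  symm := by
    constructor
    rintro (⟨i,x⟩|z) (⟨j,y⟩|w) h
    · exact ⟨h.1.symm, h.2.symm⟩
    all_goals exact h.elim
  loopless := by
    constructor
    rintro (⟨i,x⟩|z) h
    · exact H.loopless.irrefl x h.2
    · exact h

lemma prod_numKDIS {m : ℕ} (H : SimpleGraph (Fin m)) (k q r t : ℕ) (hH : t ≤ numKDIS H k) :
    t ^ q ≤ numKDIS (prodGraph H q r) k := by
  classical
  have hDIS : ∀ f : Fin q → {D // IsKDIS H k D},
      IsKDIS (prodGraph H q r) k
        ((Finset.univ.filter (fun p : Fin q × Fin m => p.2 ∈ (f p.1).1)).disjSum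
          Finset.univ) := by
    intro f
    constructor
    · rintro (⟨i,x⟩|z) hv (⟨j,y⟩|w) hw hadj
      · have hij : i = j := hadj.1
        have hAdj : H.Adj x y := hadj.2
        subst hij
        rw [Finset.inl_mem_disjSum, Finset.mem_filter] at hv hw
        exact (f i).2.1 x hv.2 y hw.2 hAdj
      · exact hadj
      · exact hadj
      · exact hadj
    · rintro (⟨i,x⟩|z) hv
      · rw [Finset.inl_mem_disjSum, Finset.mem_filter] at hv
        have hx : x ∉ (f i).1 := fun h => hv ⟨Finset.mem_univ _, h⟩
        have hset : ((prodGraph H q r).neighborSet (Sum.inl (i, x)) ∩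
            (((Finset.univ.filter (fun p : Fin q × Fin m => p.2 ∈ (f p.1).1)).disjSum
              (Finset.univ : Finset (Fin r)) : Finset ((Fin q × Fin m) ⊕ Fin r)) :
              Set ((Fin q × Fin m) ⊕ Fin r)))
            = (fun y => Sum.inl (i, y)) '' (H.neighborSet x ∩ ((f i).1 : Set (Fin m))) := by
          ext w
          constructor
          · rintro ⟨hadj, hmem⟩
            rcases w with ⟨j,y⟩|z
            · have hij : i = j := hadj.1
              have hAdj : H.Adj x y := hadj.2
              subst hij
              rw [Finset.mem_coe, Finset.inl_mem_disjSum, Finset.mem_filter] at hmem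
              exact ⟨y, ⟨hAdj, hmem.2⟩, rfl⟩
            · exact hadj.elim
          · rintro ⟨y, ⟨h1, h2⟩, rfl⟩
            refine ⟨⟨rfl, h1⟩, ?_⟩
            rw [Finset.mem_coe, Finset.inl_mem_disjSum, Finset.mem_filter]
            exact ⟨Finset.mem_univ _, h2⟩
        rw [hset, Set.ncard_image_of_injective _ (fun a b hab => by simpa using hab)]
        exact (f i).2.2 x hx
      · exact absurd (Finset.inr_mem_disjSum.mpr (Finset.mem_univ z)) hv
  have hinj : Function.Injective
      (fun f : Fin q → {D // IsKDIS H k D} =>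
        (⟨(Finset.univ.filter (fun p : Fin q × Fin m => p.2 ∈ (f p.1).1)).disjSum
          Finset.univ, hDIS f⟩ : {D // IsKDIS (prodGraph H q r) k D})) := by
    intro f g hfg
    have hD := congrArg Subtype.val hfg
    simp only at hD
    funext i
    apply Subtype.ext
    ext x
    have := Finset.ext_iff.mp hD (Sum.inl (i, x))
    rw [Finset.inl_mem_disjSum, Finset.mem_filter, Finset.inl_mem_disjSum,
      Finset.mem_filter] at this
    constructor
    · intro hx; exact (this.mp ⟨Finset.mem_univ _, hx⟩).2
    · intro hx; exact (this.mpr ⟨Finset.mem_univ _, hx⟩).2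
  calc t ^ q ≤ (numKDIS H k) ^ q := Nat.pow_le_pow_left hH q
    _ = Nat.card (Fin q → {D // IsKDIS H k D}) := by
        rw [Nat.card_fun, Nat.card_eq_fintype_card (α := Fin q), Fintype.card_fin, numKDIS]
    _ ≤ numKDIS (prodGraph H q r) k := Nat.card_le_card_of_injective _ hinj

end Main

theorem mi_ge_pow_floor (k t n : ℕ) (hk : 1 ≤ k) (ht : 1 ≤ t) (hn : 1 ≤ n) :
    t ^ (n / mDIS k t) ≤ mi k n := by
  classical
  have hS : {n : ℕ | ∃ G : SimpleGraph (Fin n), t ≤ numKDIS G k}.Nonempty := by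
    refine ⟨t * k, (baseGraph t k).comap ⇑finProdFinEquiv.symm, ?_⟩
    rw [numKDIS_comap finProdFinEquiv (baseGraph t k) k]
    exact base_numKDIS t k hk
  obtain ⟨H, hH⟩ : ∃ G : SimpleGraph (Fin (mDIS k t)), t ≤ numKDIS G k := Nat.sInf_mem hS
  have hcard : (n / mDIS k t) * mDIS k t + n % mDIS k t = n := by
    rw [Nat.mul_comm]
    exact Nat.div_add_mod n (mDIS k t)
  have e : (Fin (n / mDIS k t) × Fin (mDIS k t)) ⊕ Fin (n % mDIS k t) ≃ Fin n :=
    ((Equiv.sumCongr finProdFinEquiv (Equiv.refl (Fin (n % mDIS k t)))).trans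
      finSumFinEquiv).trans (finCongr hcard)
  have h1 : t ^ (n / mDIS k t) ≤ numKDIS (prodGraph H (n / mDIS k t) (n % mDIS k t)) k :=
    prod_numKDIS H k (n / mDIS k t) (n % mDIS k t) t hH
  have h2 : numKDIS ((prodGraph H (n / mDIS k t) (n % mDIS k t)).comap ⇑e.symm) k
      = numKDIS (prodGraph H (n / mDIS k t) (n % mDIS k t)) k :=
    numKDIS_comap e _ k
  calc t ^ (n / mDIS k t)
      ≤ numKDIS ((prodGraph H (n / mDIS k t) (n % mDIS k t)).comap ⇑e.symm) k := h2 ▸ h1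
    _ ≤ mi k n := le_mi _ k
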